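/- For every integer n ≥ 1, two n-chains x and x' with x ≠ x' form a pair of amicable chains (i.e., s(x) = x' and s(x') = x) if and only if, up to swapping x and x', one of the following holds: (a) n = 6, x = (2,3,0,1,0,0) and x' = (3,1,1,1,0,0); (b) n ≥ 8, x satisfies x_0 = n−4, x_1 = 3, x_{n−3} = 1 and x_j = 0 for every other index j, and x' satisfies x'_0 = n−3, x'_1 = 1, x'_3 = 1, x'_{n−4} = 1 and x'_j = 0 for every other index j. -/

import Mathlib

/-- The counting operator: `countOp n x j` is the number of indices `i` with `x i = j`. -/
def countOp (n : ℕ) (x : Fin n → ℕ) : Fin n → ℕ :=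
  fun j => (Finset.univ.filter fun i => x i = (j : ℕ)).card

/-- The case `n = 6`: the amicable pair `(2,3,0,1,0,0)`, `(3,1,1,1,0,0)`. -/
def amicableCaseA (n : ℕ) (x x' : Fin n → ℕ) : Prop :=
  n = 6 ∧ (∀ i : Fin n, x i = [2, 3, 0, 1, 0, 0].getD (i : ℕ) 0) ∧
    (∀ i : Fin n, x' i = [3, 1, 1, 1, 0, 0].getD (i : ℕ) 0)

/-- The case `n ≥ 8`: the amicable pair `(n-4,3,0,…,0,1,0,0)`, `(n-3,1,0,1,…,1,0,0,0)`. -/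
def amicableCaseB (n : ℕ) (x x' : Fin n → ℕ) : Prop :=
  8 ≤ n ∧
    (∀ i : Fin n, x i =
      if (i : ℕ) = 0 then n - 4
      else if (i : ℕ) = 1 then 3
      else if (i : ℕ) = n - 3 then 1
      else 0) ∧
    (∀ i : Fin n, x' i =
      if (i : ℕ) = 0 then n - 3
      else if (i : ℕ) = 1 then 1
      else if (i : ℕ) = 3 then 1
      else if (i : ℕ) = n - 4 then 1
      else 0)

namespace AmicAux
open Finset
variable {n : ℕ}
def cnt (x : Fin n → ℕ) (m : ℕ) : ℕ := (Finset.univ.filter fun i => x i = m).card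

lemma countOp_apply (x : Fin n → ℕ) (j : Fin n) : countOp n x j = cnt x (j : ℕ) := rfl

lemma fiber_eq (x : Fin n → ℕ) (hx : ∀ i, x i < n) (j : Fin n) :
    (univ.filter fun i => (⟨x i, hx i⟩ : Fin n) = j) = (univ.filter fun i => x i = (j:ℕ)) := by
  apply Finset.filter_congr; intro i _; simp [Fin.ext_iff]

lemma sum_cnt (x : Fin n → ℕ) (hx : ∀ i, x i < n) : ∑ j : Fin n, cnt x (j : ℕ) = n := by
  have h := Finset.card_eq_sum_card_fiberwise
      (f := fun i : Fin n => (⟨x i, hx i⟩ : Fin n)) (s := univ) (t := univ)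
      (fun i _ => mem_univ _)
  rw [card_univ, Fintype.card_fin] at h
  calc ∑ j : Fin n, cnt x (j:ℕ)
      = ∑ j : Fin n, (univ.filter fun i => (⟨x i, hx i⟩ : Fin n) = j).card := by
        exact Finset.sum_congr rfl fun j _ => by rw [fiber_eq x hx j]; rfl
    _ = n := h.symm

lemma sum_mul_cnt (x : Fin n → ℕ) (hx : ∀ i, x i < n) :
    ∑ j : Fin n, (j : ℕ) * cnt x (j : ℕ) = ∑ i, x i := by
  have h := Finset.sum_fiberwise_of_maps_to (s := univ) (t := univ)
      (g := fun i : Fin n => (⟨x i, hx i⟩ : Fin n))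
      (fun i _ => mem_univ _) (f := fun i : Fin n => x i)
  rw [← h]
  apply Finset.sum_congr rfl
  intro j _
  rw [fiber_eq x hx j]
  rw [Finset.sum_congr rfl (fun i hi => (Finset.mem_filter.mp hi).2)]
  simp [cnt, mul_comm]

lemma excess (x : Fin n → ℕ) (hsum : ∑ i, x i = n) : ∑ i, (x i - 1) = cnt x 0 := by
  have h2 : ∑ i, x i = ∑ i, (x i - 1) + ∑ i, (if x i = 0 then 0 else 1) := by
    rw [← Finset.sum_add_distrib]
    exact Finset.sum_congr rfl fun i _ => by split <;> omega
  have h3 : ∑ i : Fin n, (if x i = 0 then 0 else 1) = n - cnt x 0 := by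
    rw [Finset.sum_ite, Finset.sum_const, Finset.sum_const]
    simp only [smul_eq_mul, mul_zero, mul_one, zero_add]
    have := Finset.card_filter_add_card_filter_not (s := univ)
        (p := fun i : Fin n => x i = 0)
    simp only [card_univ, Fintype.card_fin] at this
    unfold cnt
    omega
  have h4 : cnt x 0 ≤ n := by
    have := Finset.card_filter_le (univ : Finset (Fin n)) (fun i => x i = 0)
    simpa [cnt] using this
  omega

lemma sum_eq_one {s : Finset (Fin n)} {f : Fin n → ℕ} (h : ∑ i ∈ s, f i = 1) :
    ∃ i₀ ∈ s, f i₀ = 1 ∧ ∀ i ∈ s, i ≠ i₀ → f i = 0 := by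
  have hne : ∃ i ∈ s, f i ≠ 0 := by
    by_contra hc
    push_neg at hc
    rw [Finset.sum_eq_zero hc] at h
    omega
  obtain ⟨i₀, hi₀, hfi₀⟩ := hne
  refine ⟨i₀, hi₀, ?_, ?_⟩
  · have := Finset.add_sum_erase s f hi₀
    have h1 : f i₀ ≤ 1 := by
      rw [← this] at h; omega
    omega
  · intro i hi hne'
    have h2 := Finset.add_sum_erase s f hi₀
    rw [← h2] at h
    have hf1 : f i₀ = 1 := by omega
    have : ∑ j ∈ s.erase i₀, f j = 0 := by omega
    have := Finset.sum_eq_zero_iff.mp this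
    exact this i (Finset.mem_erase.mpr ⟨hne', hi⟩)

lemma sum_le_one {s : Finset (Fin n)} {f : Fin n → ℕ} (h : ∑ i ∈ s, (f i - 1) = 0) :
    ∀ i ∈ s, f i ≤ 1 := by
  intro i hi
  have := Finset.sum_eq_zero_iff.mp h i hi
  omega

lemma sum_three {f : Fin n → ℕ} {p q r : Fin n} (hpq : p ≠ q) (hpr : p ≠ r) (hqr : q ≠ r)
    (h0 : ∀ i, i ≠ p → i ≠ q → i ≠ r → f i = 0) : ∑ i, f i = f p + f q + f r := by
  have hsub : ({p, q, r} : Finset (Fin n)) ⊆ univ := Finset.subset_univ _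
  rw [← Finset.sum_subset hsub (fun i _ hi => by
    simp only [Finset.mem_insert, Finset.mem_singleton] at hi
    push_neg at hi
    exact h0 i hi.1 hi.2.1 hi.2.2)]
  rw [Finset.sum_insert (by simp [hpq, hpr]), Finset.sum_insert (by simp [hqr]),
    Finset.sum_singleton, add_assoc]

lemma sum_four {f : Fin n → ℕ} {p q r t : Fin n} (hpq : p ≠ q) (hpr : p ≠ r) (hpt : p ≠ t)
    (hqr : q ≠ r) (hqt : q ≠ t) (hrt : r ≠ t)
    (h0 : ∀ i, i ≠ p → i ≠ q → i ≠ r → i ≠ t → f i = 0) :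
    ∑ i, f i = f p + f q + f r + f t := by
  have hsub : ({p, q, r, t} : Finset (Fin n)) ⊆ univ := Finset.subset_univ _
  rw [← Finset.sum_subset hsub (fun i _ hi => by
    simp only [Finset.mem_insert, Finset.mem_singleton] at hi
    push_neg at hi
    exact h0 i hi.1 hi.2.1 hi.2.2.1 hi.2.2.2)]
  rw [Finset.sum_insert (by simp [hpq, hpr, hpt]), Finset.sum_insert (by simp [hqr, hqt]),
    Finset.sum_insert (by simp [hrt]), Finset.sum_singleton, add_assoc, add_assoc]

-- card helpers
lemma card_filter_none {p : Fin n → Prop} [DecidablePred p] (h : ∀ i, ¬ p i) :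
    (univ.filter p).card = 0 := by
  rw [Finset.filter_false_of_mem (fun i _ => h i)]; simp

lemma card_filter_single {p : Fin n → Prop} [DecidablePred p] {k : ℕ} (hk : k < n)
    (h : ∀ i, p i ↔ (i : ℕ) = k) : (univ.filter p).card = 1 := by
  have : univ.filter p = {(⟨k, hk⟩ : Fin n)} := by
    ext i; simp [h i, Fin.ext_iff]
  rw [this, Finset.card_singleton]

lemma card_filter_pair {p : Fin n → Prop} [DecidablePred p] {k l : ℕ} (hk : k < n) (hl : l < n)
    (hkl : k ≠ l) (h : ∀ i, p i ↔ ((i : ℕ) = k ∨ (i : ℕ) = l)) : (univ.filter p).card = 2 := by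
  have : univ.filter p = {(⟨k, hk⟩ : Fin n), ⟨l, hl⟩} := by
    ext i; simp [h i, Fin.ext_iff]
  rw [this, Finset.card_insert_of_notMem (by simp [Fin.ext_iff, hkl]), Finset.card_singleton]

lemma card_filter_triple {p : Fin n → Prop} [DecidablePred p] {k l m : ℕ} (hk : k < n)
    (hl : l < n) (hm : m < n) (hkl : k ≠ l) (hkm : k ≠ m) (hlm : l ≠ m)
    (h : ∀ i, p i ↔ ((i : ℕ) = k ∨ (i : ℕ) = l ∨ (i : ℕ) = m)) : (univ.filter p).card = 3 := by
  have : univ.filter p = {(⟨k, hk⟩ : Fin n), ⟨l, hl⟩, ⟨m, hm⟩} := by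
    ext i; simp [h i, Fin.ext_iff]
  rw [this, Finset.card_insert_of_notMem (by simp [Fin.ext_iff, hkl, hkm]),
    Finset.card_insert_of_notMem (by simp [Fin.ext_iff, hlm]), Finset.card_singleton]

lemma card_filter_compl {p : Fin n → Prop} [DecidablePred p] {c : ℕ}
    (h : (univ.filter fun i => ¬ p i).card = c) : (univ.filter p).card = n - c := by
  have := Finset.card_filter_add_card_filter_not (s := univ) (p := p)
  simp only [card_univ, Fintype.card_fin] at this
  omega

lemma card_filter_compl_three {p : Fin n → Prop} [DecidablePred p] {k l m : ℕ} (hk : k < n)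
    (hl : l < n) (hm : m < n) (hkl : k ≠ l) (hkm : k ≠ m) (hlm : l ≠ m)
    (h : ∀ i, p i ↔ ((i : ℕ) ≠ k ∧ (i : ℕ) ≠ l ∧ (i : ℕ) ≠ m)) :
    (univ.filter p).card = n - 3 := by
  apply card_filter_compl
  apply card_filter_triple hk hl hm hkl hkm hlm
  intro i
  have := h i
  by_cases h1 : (i:ℕ) = k <;> by_cases h2 : (i:ℕ) = l <;> by_cases h3 : (i:ℕ) = m <;>
    simp_all

lemma card_filter_compl_four {p : Fin n → Prop} [DecidablePred p] {k l m o : ℕ} (hk : k < n)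
    (hl : l < n) (hm : m < n) (ho : o < n) (hkl : k ≠ l) (hkm : k ≠ m) (hko : k ≠ o)
    (hlm : l ≠ m) (hlo : l ≠ o) (hmo : m ≠ o)
    (h : ∀ i, p i ↔ ((i : ℕ) ≠ k ∧ (i : ℕ) ≠ l ∧ (i : ℕ) ≠ m ∧ (i : ℕ) ≠ o)) :
    (univ.filter p).card = n - 4 := by
  apply card_filter_compl
  have : univ.filter (fun i => ¬ p i) = {(⟨k, hk⟩ : Fin n), ⟨l, hl⟩, ⟨m, hm⟩, ⟨o, ho⟩} := by
    ext i
    simp only [Finset.mem_filter, Finset.mem_univ, true_and, h i, Finset.mem_insert,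
      Finset.mem_singleton, Fin.ext_iff]
    push_neg
    tauto
  rw [this, Finset.card_insert_of_notMem (by simp [Fin.ext_iff, hkl, hkm, hko]),
    Finset.card_insert_of_notMem (by simp [Fin.ext_iff, hlm, hlo]),
    Finset.card_insert_of_notMem (by simp [Fin.ext_iff, hmo]), Finset.card_singleton]

def fB1 (n : ℕ) : Fin n → ℕ := fun i =>
  if (i : ℕ) = 0 then n - 4 else if (i : ℕ) = 1 then 3 else if (i : ℕ) = n - 3 then 1 else 0

def fB2 (n : ℕ) : Fin n → ℕ := fun i =>
  if (i : ℕ) = 0 then n - 3 else if (i : ℕ) = 1 then 1 else if (i : ℕ) = 3 then 1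
  else if (i : ℕ) = n - 4 then 1 else 0

def fSD (n : ℕ) : Fin n → ℕ := fun i =>
  if (i : ℕ) = 0 then n - 4 else if (i : ℕ) = 1 then 2 else if (i : ℕ) = 2 then 1
  else if (i : ℕ) = n - 4 then 1 else 0

lemma countOp_fB1 (h : 8 ≤ n) : countOp n (fB1 n) = fB2 n := by
  funext j
  show (univ.filter fun i => fB1 n i = (j:ℕ)).card = fB2 n j
  unfold fB2
  by_cases h0 : (j:ℕ) = 0
  · rw [if_pos h0]
    apply card_filter_compl_three (k := 0) (l := 1) (m := n-3) (by omega) (by omega) (by omega)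
      (by omega) (by omega) (by omega)
    intro i; unfold fB1; rw [h0]; split_ifs <;> (try simp) <;> omega
  · rw [if_neg h0]
    by_cases h1 : (j:ℕ) = 1
    · rw [if_pos h1]
      apply card_filter_single (k := n-3) (by omega)
      intro i; unfold fB1; rw [h1]; split_ifs <;> (try simp) <;> omega
    · rw [if_neg h1]
      by_cases h3 : (j:ℕ) = 3
      · rw [if_pos h3]
        apply card_filter_single (k := 1) (by omega)
        intro i; unfold fB1; rw [h3]; split_ifs <;> (try simp) <;> omega
      · rw [if_neg h3]
        by_cases h4 : (j:ℕ) = n - 4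
        · rw [if_pos h4]
          apply card_filter_single (k := 0) (by omega)
          intro i; unfold fB1; rw [h4]; split_ifs <;> (try simp) <;> omega
        · rw [if_neg h4]
          apply card_filter_none
          intro i; unfold fB1; split_ifs <;> (try simp) <;> omega

lemma countOp_fB2 (h : 8 ≤ n) : countOp n (fB2 n) = fB1 n := by
  funext j
  show (univ.filter fun i => fB2 n i = (j:ℕ)).card = fB1 n j
  unfold fB1
  by_cases h0 : (j:ℕ) = 0
  · rw [if_pos h0]
    apply card_filter_compl_four (k := 0) (l := 1) (m := 3) (o := n-4) (by omega) (by omega)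
      (by omega) (by omega) (by omega) (by omega) (by omega) (by omega) (by omega) (by omega)
    intro i; unfold fB2; rw [h0]; split_ifs <;> (try simp) <;> omega
  · rw [if_neg h0]
    by_cases h1 : (j:ℕ) = 1
    · rw [if_pos h1]
      apply card_filter_triple (k := 1) (l := 3) (m := n-4) (by omega) (by omega) (by omega)
        (by omega) (by omega) (by omega)
      intro i; unfold fB2; rw [h1]; split_ifs <;> (try simp) <;> omega
    · rw [if_neg h1]
      by_cases h3 : (j:ℕ) = n - 3
      · rw [if_pos h3]
        apply card_filter_single (k := 0) (by omega)
        intro i; unfold fB2; rw [h3]; split_ifs <;> (try simp) <;> omega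
      · rw [if_neg h3]
        apply card_filter_none
        intro i; unfold fB2; split_ifs <;> (try simp) <;> omega

lemma countOp_fSD (h : 7 ≤ n) : countOp n (fSD n) = fSD n := by
  funext j
  show (univ.filter fun i => fSD n i = (j:ℕ)).card = fSD n j
  unfold fSD
  by_cases h0 : (j:ℕ) = 0
  · rw [if_pos h0]
    apply card_filter_compl_four (k := 0) (l := 1) (m := 2) (o := n-4) (by omega) (by omega)
      (by omega) (by omega) (by omega) (by omega) (by omega) (by omega) (by omega) (by omega)
    intro i; show (if (i : ℕ) = 0 then n - 4 else _) = _ ↔ _; rw [h0]; split_ifs <;> (try simp) <;> omega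
  · rw [if_neg h0]
    by_cases h1 : (j:ℕ) = 1
    · rw [if_pos h1]
      apply card_filter_pair (k := 2) (l := n-4) (by omega) (by omega) (by omega)
      intro i; show (if (i : ℕ) = 0 then n - 4 else _) = _ ↔ _; rw [h1]; split_ifs <;> (try simp) <;> omega
    · rw [if_neg h1]
      by_cases h2 : (j:ℕ) = 2
      · rw [if_pos h2]
        apply card_filter_single (k := 1) (by omega)
        intro i; show (if (i : ℕ) = 0 then n - 4 else _) = _ ↔ _; rw [h2]; split_ifs <;> (try simp) <;> omega
      · rw [if_neg h2]
        by_cases h4 : (j:ℕ) = n - 4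
        · rw [if_pos h4]
          apply card_filter_single (k := 0) (by omega)
          intro i; show (if (i : ℕ) = 0 then n - 4 else _) = _ ↔ _; rw [h4]; split_ifs <;> (try simp) <;> omega
        · rw [if_neg h4]
          apply card_filter_none
          intro i; show ¬ (if (i : ℕ) = 0 then n - 4 else _) = _; split_ifs <;> (try simp) <;> omega


lemma ne_symm' {A B : Fin n → ℕ} (h : A ≠ B) : B ≠ A := fun e => h e.symm

lemma hAj_of (A B : Fin n → ℕ) (hBA : countOp n B = A) : ∀ j : Fin n, A j = cnt B (j : ℕ) :=
  fun j => (congrFun hBA j).symm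

lemma sumA_of (A B : Fin n → ℕ) (hB : ∀ i, B i < n) (hBA : countOp n B = A) :
    ∑ i, A i = n := by
  rw [Finset.sum_congr rfl fun j _ => hAj_of A B hBA j]
  exact sum_cnt B hB

lemma two_le_cntzero (h2 : 2 ≤ n) (A B : Fin n → ℕ) (hA : ∀ i, A i < n) (hB : ∀ i, B i < n)
    (hAB : countOp n A = B) (hBA : countOp n B = A) (hne : A ≠ B) : 2 ≤ cnt B 0 := by
  have h0n : 0 < n := by omega
  have h1n : 1 < n := h2
  have hAj := hAj_of A B hBA
  have hBj := hAj_of B A hAB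
  have sumA := sumA_of A B hB hBA
  have sumB := sumA_of B A hA hAB
  have exB : ∑ i, (B i - 1) = cnt B 0 := excess B sumB
  by_contra hlt
  push_neg at hlt
  interval_cases h : cnt B 0
  · -- a = 0 : B has no zeros and all entries ≤ 1, so all = 1
    have hle : ∀ i, B i ≤ 1 := fun i => sum_le_one exB i (Finset.mem_univ i)
    have hnz : ∀ i, B i ≠ 0 := by
      intro i hzero
      have : i ∈ Finset.univ.filter fun i => B i = (0:ℕ) := by simp [hzero]
      have hcard : (Finset.univ.filter fun i : Fin n => B i = (0:ℕ)).card = 0 := h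
      rw [Finset.card_eq_zero] at hcard
      simp [hcard] at this
    have hone : ∀ i, B i = 1 := fun i => by have := hle i; have := hnz i; omega
    have : A ⟨1, h1n⟩ = n := by
      rw [hAj ⟨1, h1n⟩]
      show (Finset.univ.filter fun i => B i = 1).card = n
      rw [Finset.filter_true_of_mem fun i _ => hone i]
      simp
    have := hA ⟨1, h1n⟩
    omega
  · -- a = 1
    obtain ⟨i₀, -, hfi₀, hrest0⟩ := sum_eq_one (f := fun i => B i - 1) exB
    have hBi₀ : B i₀ = 2 := by omega
    have h3n : 3 ≤ n := by have := hB i₀; omega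
    have hle : ∀ i, i ≠ i₀ → B i ≤ 1 := by
      intro i hi
      have := hrest0 i (Finset.mem_univ i) hi
      omega
    -- unique zero z₀
    have hz : (Finset.univ.filter fun i : Fin n => B i = (0:ℕ)).card = 1 := h
    obtain ⟨z₀, hz₀⟩ := Finset.card_eq_one.mp hz
    have hBz₀ : B z₀ = 0 := by
      have : z₀ ∈ Finset.univ.filter fun i : Fin n => B i = (0:ℕ) := by rw [hz₀]; simp
      simpa using this
    have hzuniq : ∀ i, B i = 0 → i = z₀ := by
      intro i hi
      have : i ∈ Finset.univ.filter fun i : Fin n => B i = (0:ℕ) := by simp [hi]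
      rw [hz₀] at this; simpa using this
    have hz₀i₀ : z₀ ≠ i₀ := fun e => by rw [e, hBi₀] at hBz₀; omega
    have hmid : ∀ i, i ≠ i₀ → i ≠ z₀ → B i = 1 := by
      intro i h1 h2'
      have := hle i h1
      have : B i ≠ 0 := fun e => h2' (hzuniq i e)
      omega
    -- A values
    have hA0 : A ⟨0, h0n⟩ = 1 := by rw [hAj ⟨0, h0n⟩]; exact h
    have hA1 : A ⟨1, h1n⟩ = n - 2 := by
      rw [hAj ⟨1, h1n⟩]
      show (Finset.univ.filter fun i => B i = 1).card = n - 2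
      apply card_filter_compl (c := 2)
      have : (Finset.univ.filter fun i => ¬ B i = 1) = {i₀, z₀} := by
        ext i
        simp only [Finset.mem_filter, Finset.mem_univ, true_and, Finset.mem_insert,
          Finset.mem_singleton]
        constructor
        · intro hne1
          by_contra hc
          push_neg at hc
          exact hne1 (hmid i hc.1 hc.2)
        · rintro (rfl | rfl) <;> omega
      rw [this, Finset.card_insert_of_notMem (by simp [hz₀i₀.symm]), Finset.card_singleton]
    have hA2 : A ⟨2, h3n⟩ = 1 := by
      rw [hAj ⟨2, h3n⟩]
      show (Finset.univ.filter fun i => B i = 2).card = 1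
      have : (Finset.univ.filter fun i => B i = 2) = {i₀} := by
        ext i
        simp only [Finset.mem_filter, Finset.mem_univ, true_and, Finset.mem_singleton]
        constructor
        · intro he
          by_contra hc
          have := hle i hc
          omega
        · rintro rfl; exact hBi₀
      rw [this, Finset.card_singleton]
    have hArest : ∀ j : Fin n, 3 ≤ (j:ℕ) → A j = 0 := by
      intro j hj
      rw [hAj j]
      apply card_filter_none
      intro i
      rcases eq_or_ne i i₀ with rfl | hi
      · omega
      · have := hle i hi; omega
    -- b = n - 3
    have hbval : B ⟨0, h0n⟩ = n - 3 := by
      rw [hBj ⟨0, h0n⟩]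
      show cnt A 0 = n - 3
      rw [← excess A sumA]
      rw [Finset.sum_eq_single ⟨1, h1n⟩]
      · rw [hA1]; omega
      · intro i _ hi
        rcases Nat.lt_or_ge (i : ℕ) 3 with hlt3 | hge3
        · interval_cases hiv : (i : ℕ)
          · have : i = ⟨0, h0n⟩ := Fin.ext hiv
            rw [this, hA0]; rfl
          · exact absurd (Fin.ext hiv) hi
          · have : i = ⟨2, h3n⟩ := Fin.ext hiv
            rw [this, hA2]; rfl
        · rw [hArest i hge3]; rfl
      · intro hmem; exact absurd (Finset.mem_univ _) hmem
    have hble : B ⟨0, h0n⟩ ≤ 2 := by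
      rcases eq_or_ne (⟨0, h0n⟩ : Fin n) i₀ with he | hne'
      · rw [he, hBi₀]
      · exact le_trans (hle _ hne') (by omega)
    have h5n : n ≤ 5 := by omega
    -- A fully determined
    have hAform : ∀ i : Fin n, A i =
        (if (i:ℕ) = 0 then 1 else if (i:ℕ) = 1 then n - 2 else if (i:ℕ) = 2 then 1 else 0) := by
      intro i
      by_cases c0 : (i:ℕ) = 0
      · rw [if_pos c0, show i = ⟨0, h0n⟩ from Fin.ext c0, hA0]
      · rw [if_neg c0]
        by_cases c1 : (i:ℕ) = 1
        · rw [if_pos c1, show i = ⟨1, h1n⟩ from Fin.ext c1, hA1]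
        · rw [if_neg c1]
          by_cases c2 : (i:ℕ) = 2
          · rw [if_pos c2, show i = ⟨2, h3n⟩ from Fin.ext c2, hA2]
          · rw [if_neg c2]
            exact hArest i (by omega)
    have hAfun : A = fun i : Fin n =>
        (if (i:ℕ) = 0 then 1 else if (i:ℕ) = 1 then n - 2 else if (i:ℕ) = 2 then 1 else 0) :=
      funext hAform
    interval_cases n
    · -- n = 3
      have : B ⟨1, h1n⟩ = 3 := by
        rw [hBj ⟨1, h1n⟩]
        show cnt A 1 = 3
        rw [hAfun]
        decide
      have := hB ⟨1, h1n⟩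
      omega
    · -- n = 4 : A is self-descriptive, A = B
      apply hne
      rw [← hAB, hAfun]
      decide
    · -- n = 5 : s(s(A)) ≠ A
      have hBfun : B = countOp 5 (fun i : Fin 5 =>
          (if (i:ℕ) = 0 then 1 else if (i:ℕ) = 1 then 5 - 2 else if (i:ℕ) = 2 then 1 else 0)) := by
        rw [← hAB, hAfun]
      have : countOp 5 (countOp 5 (fun i : Fin 5 =>
          (if (i:ℕ) = 0 then 1 else if (i:ℕ) = 1 then 5 - 2 else if (i:ℕ) = 2 then 1 else 0))) ≠
          (fun i : Fin 5 =>
          (if (i:ℕ) = 0 then 1 else if (i:ℕ) = 1 then 5 - 2 else if (i:ℕ) = 2 then 1 else 0)) := by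
        decide
      apply this
      rw [← hBfun, hBA, hAfun]

lemma caseS2 (h2 : 2 ≤ n) (A B : Fin n → ℕ) (hA : ∀ i, A i < n) (hB : ∀ i, B i < n)
    (hAB : countOp n A = B) (hBA : countOp n B = A)
    (ha2 : 2 ≤ cnt B 0) (hb : cnt A 0 = cnt B 0 + 1)
    (hSB0 : ∀ i : Fin n, (i : ℕ) ≠ 0 → B i ≤ 1) :
    amicableCaseA n A B ∨ amicableCaseB n A B := by
  have h0n : 0 < n := by omega
  have h1n : 1 < n := h2
  have hAj := hAj_of A B hBA
  have hBj := hAj_of B A hAB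
  have sumA := sumA_of A B hB hBA
  have sumB := sumA_of B A hA hAB
  set a := cnt B 0 with hadef
  set b := cnt A 0 with hbdef
  have hB0 : B ⟨0, h0n⟩ = b := hBj ⟨0, h0n⟩
  have hA0 : A ⟨0, h0n⟩ = a := hAj ⟨0, h0n⟩
  have hbn : b < n := by rw [← hB0]; exact hB ⟨0, h0n⟩
  have hb3 : 3 ≤ b := by omega
  -- A at index b
  have hAb : A ⟨b, hbn⟩ = 1 := by
    rw [hAj ⟨b, hbn⟩]
    show (Finset.univ.filter fun i => B i = b).card = 1
    have : (Finset.univ.filter fun i => B i = b) = {⟨0, h0n⟩} := by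
      ext i
      simp only [Finset.mem_filter, Finset.mem_univ, true_and, Finset.mem_singleton]
      constructor
      · intro he
        by_contra hc
        have : (i : ℕ) ≠ 0 := fun e => hc (Fin.ext e)
        have := hSB0 i this
        omega
      · rintro rfl; exact hB0
    rw [this, Finset.card_singleton]
  have hArest : ∀ j : Fin n, 2 ≤ (j : ℕ) → (j : ℕ) ≠ b → A j = 0 := by
    intro j hj2 hjb
    rw [hAj j]
    apply card_filter_none
    intro i
    by_cases hi0 : (i : ℕ) = 0
    · rw [show i = ⟨0, h0n⟩ from Fin.ext hi0, hB0]
      omega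
    · have := hSB0 i hi0
      omega
  -- S_A = 2 gives A 1 = 3
  have hSA2 : ∑ i ∈ Finset.univ.erase (⟨0, h0n⟩ : Fin n), (A i - 1) = 2 := by
    have hex : ∑ i, (A i - 1) = b := excess A sumA
    have h5 : A ⟨0, h0n⟩ - 1 + ∑ i ∈ Finset.univ.erase (⟨0, h0n⟩ : Fin n), (A i - 1) =
        ∑ i, (A i - 1) :=
      Finset.add_sum_erase Finset.univ (fun i => A i - 1) (Finset.mem_univ (⟨0, h0n⟩ : Fin n))
    rw [hex, hA0] at h5
    omega
  have hA1 : A ⟨1, h1n⟩ = 3 := by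
    rw [Finset.sum_eq_single_of_mem (⟨1, h1n⟩ : Fin n)
      (Finset.mem_erase.mpr ⟨fun e => by simpa [Fin.ext_iff] using e, Finset.mem_univ _⟩)] at hSA2
    · omega
    · intro i hi hine
      have hi0 : (i : ℕ) ≠ 0 := fun e => (Finset.mem_erase.mp hi).1 (Fin.ext e)
      have hi1 : (i : ℕ) ≠ 1 := fun e => hine (Fin.ext e)
      by_cases hib : (i : ℕ) = b
      · rw [show i = ⟨b, hbn⟩ from Fin.ext hib, hAb]
        rfl
      · rw [hArest i (by omega) hib]
        rfl
  -- sum: n = a + 4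
  have hsum3 : ∑ i, A i = A ⟨0, h0n⟩ + A ⟨1, h1n⟩ + A ⟨b, hbn⟩ := by
    apply sum_three
    · simp [Fin.ext_iff]
    · simp [Fin.ext_iff]; omega
    · simp [Fin.ext_iff]; omega
    · intro i hp hq hr
      refine hArest i ?_ ?_
      · have : (i:ℕ) ≠ 0 := fun e => hp (Fin.ext e)
        have : (i:ℕ) ≠ 1 := fun e => hq (Fin.ext e)
        omega
      · exact fun e => hr (Fin.ext e)
  have hna : n = a + 4 := by
    rw [sumA, hA0, hA1, hAb] at hsum3
    omega
  have hbval : b = n - 3 := by omega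
  have h6n : 6 ≤ n := by omega
  -- A = fB1 n
  have hAform : ∀ i : Fin n, A i = fB1 n i := by
    intro i
    unfold fB1
    by_cases c0 : (i:ℕ) = 0
    · rw [if_pos c0, show i = ⟨0, h0n⟩ from Fin.ext c0, hA0]; omega
    · rw [if_neg c0]
      by_cases c1 : (i:ℕ) = 1
      · rw [if_pos c1, show i = ⟨1, h1n⟩ from Fin.ext c1, hA1]
      · rw [if_neg c1]
        by_cases c3 : (i:ℕ) = n - 3
        · rw [if_pos c3, show i = ⟨b, hbn⟩ from Fin.ext (show (i:ℕ) = b by omega), hAb]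
        · rw [if_neg c3]
          exact hArest i (by omega) (by omega)
  have hAfun : A = fB1 n := funext hAform
  rcases Nat.lt_or_ge n 8 with hn8 | hn8
  · -- n = 6 or n = 7
    rcases Nat.lt_or_ge n 7 with hn7 | hn7
    · -- n = 6 : amicable case A
      left
      have hn6 : n = 6 := by omega
      subst hn6
      refine ⟨rfl, ?_, ?_⟩
      · intro i
        rw [hAform i]
        revert i; decide
      · intro i
        rw [← hAB, countOp_apply, hAfun]
        revert i; decide
    · -- n = 7 : contradiction
      exfalso
      have hn7' : n = 7 := by omega
      subst hn7'
      have h3lt : (3:ℕ) < 7 := by omega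
      have : B ⟨3, h3lt⟩ = 2 := by
        rw [hBj ⟨3, h3lt⟩]
        show cnt A 3 = 2
        rw [hAfun]
        decide
      have := hSB0 ⟨3, h3lt⟩ (by simp)
      omega
  · -- n ≥ 8 : amicable case B
    right
    refine ⟨hn8, hAform, ?_⟩
    intro i
    rw [← hAB, hAfun, countOp_fB1 hn8]
    rfl

lemma case11 (h2 : 2 ≤ n) (A B : Fin n → ℕ) (hA : ∀ i, A i < n) (hB : ∀ i, B i < n)
    (hAB : countOp n A = B) (hBA : countOp n B = A) (hne : A ≠ B)
    (ha2 : 2 ≤ cnt B 0) (hab : cnt B 0 = cnt A 0)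
    (i₀ : Fin n) (hi₀0 : (i₀ : ℕ) ≠ 0) (hAi₀ : A i₀ = 2)
    (hAle : ∀ i, i ≠ i₀ → (i : ℕ) ≠ 0 → A i ≤ 1)
    (j₀ : Fin n) (hj₀0 : (j₀ : ℕ) ≠ 0) (hBj₀ : B j₀ = 2)
    (hBle : ∀ i, i ≠ j₀ → (i : ℕ) ≠ 0 → B i ≤ 1) : False := by
  have h0n : 0 < n := by omega
  have h1n : 1 < n := h2
  have hAj := hAj_of A B hBA
  have hBj := hAj_of B A hAB
  have sumA := sumA_of A B hB hBA
  have sumB := sumA_of B A hA hAB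
  set a := cnt B 0 with hadef
  set b := cnt A 0 with hbdef
  have hB0 : B ⟨0, h0n⟩ = b := hBj ⟨0, h0n⟩
  have hA0 : A ⟨0, h0n⟩ = a := hAj ⟨0, h0n⟩
  have han : a < n := by rw [← hA0]; exact hA ⟨0, h0n⟩
  have h2n : 2 < n := by omega
  have hi₀ne : i₀ ≠ ⟨0, h0n⟩ := fun e => hi₀0 (by rw [e])
  rcases eq_or_lt_of_le ha2 with ha2' | ha3
  · -- a = 2
    have ha2'' : a = 2 := ha2'.symm
    have hB2 : B ⟨2, h2n⟩ = 2 := by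
      rw [hBj ⟨2, h2n⟩]
      show (Finset.univ.filter fun i => A i = 2).card = 2
      have : (Finset.univ.filter fun i => A i = 2) = {⟨0, h0n⟩, i₀} := by
        ext i
        simp only [Finset.mem_filter, Finset.mem_univ, true_and, Finset.mem_insert,
          Finset.mem_singleton]
        constructor
        · intro he
          by_contra hc
          push_neg at hc
          have : (i : ℕ) ≠ 0 := fun e => hc.1 (Fin.ext e)
          have := hAle i hc.2 this
          omega
        · rintro (rfl | rfl)
          · omega
          · exact hAi₀
      rw [this, Finset.card_insert_of_notMem (by simpa using hi₀ne.symm), Finset.card_singleton]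
    have hj₀2 : j₀ = ⟨2, h2n⟩ := by
      by_contra hc
      have := hBle ⟨2, h2n⟩ (fun e => hc (e.symm)) (by simp)
      omega
    have hBrest : ∀ j : Fin n, 3 ≤ (j : ℕ) → B j = 0 := by
      intro j hj
      rw [hBj j]
      apply card_filter_none
      intro i
      by_cases hi : i = ⟨0, h0n⟩
      · rw [hi, hA0]; omega
      · rcases eq_or_ne i i₀ with rfl | hii
        · omega
        · by_cases hiz : (i : ℕ) = 0
          · exact absurd (Fin.ext hiz) hi
          · have := hAle i hii hiz; omega
    have hsum3 : ∑ i, B i = B ⟨0, h0n⟩ + B ⟨1, h1n⟩ + B ⟨2, h2n⟩ := by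
      apply sum_three
      · simp [Fin.ext_iff]
      · simp [Fin.ext_iff]
      · simp [Fin.ext_iff]
      · intro i hp hq hr
        apply hBrest
        have : (i:ℕ) ≠ 0 := fun e => hp (Fin.ext e)
        have : (i:ℕ) ≠ 1 := fun e => hq (Fin.ext e)
        have : (i:ℕ) ≠ 2 := fun e => hr (Fin.ext e)
        omega
    have hB1le : B ⟨1, h1n⟩ ≤ 1 := by
      apply hBle ⟨1, h1n⟩ _ (by simp)
      rw [hj₀2]
      simp [Fin.ext_iff]
    rw [sumB, hB0, hB2] at hsum3
    have hb2 : b = 2 := by omega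
    have hn45 : n = 4 ∨ n = 5 := by omega
    have hB1 : B ⟨1, h1n⟩ = n - 4 := by omega
    have hBform : ∀ j : Fin n, B j =
        (if (j:ℕ) = 0 then 2 else if (j:ℕ) = 1 then n - 4 else if (j:ℕ) = 2 then 2 else 0) := by
      intro j
      by_cases c0 : (j:ℕ) = 0
      · rw [if_pos c0, show j = ⟨0, h0n⟩ from Fin.ext c0, hB0, hb2]
      · rw [if_neg c0]
        by_cases c1 : (j:ℕ) = 1
        · rw [if_pos c1, show j = ⟨1, h1n⟩ from Fin.ext c1, hB1]
        · rw [if_neg c1]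
          by_cases c2 : (j:ℕ) = 2
          · rw [if_pos c2, show j = ⟨2, h2n⟩ from Fin.ext c2, hB2]
          · rw [if_neg c2]
            exact hBrest j (by omega)
    have hBfun : B = fun j : Fin n =>
        (if (j:ℕ) = 0 then 2 else if (j:ℕ) = 1 then n - 4 else if (j:ℕ) = 2 then 2 else 0) :=
      funext hBform
    rcases hn45 with rfl | rfl
    · apply hne
      rw [← hBA, hBfun]
      decide
    · apply hne
      rw [← hBA, hBfun]
      decide
  · -- a ≥ 3
    have ha3' : 3 ≤ a := ha3
    have hB2 : B ⟨2, h2n⟩ = 1 := by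
      rw [hBj ⟨2, h2n⟩]
      show (Finset.univ.filter fun i => A i = 2).card = 1
      have : (Finset.univ.filter fun i => A i = 2) = {i₀} := by
        ext i
        simp only [Finset.mem_filter, Finset.mem_univ, true_and, Finset.mem_singleton]
        constructor
        · intro he
          by_contra hc
          by_cases hiz : (i : ℕ) = 0
          · rw [show i = ⟨0, h0n⟩ from Fin.ext hiz, hA0] at he; omega
          · have := hAle i hc hiz; omega
        · rintro rfl; exact hAi₀
      rw [this, Finset.card_singleton]
    have hBa : B ⟨a, han⟩ = 1 := by
      rw [hBj ⟨a, han⟩]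
      show (Finset.univ.filter fun i => A i = a).card = 1
      have : (Finset.univ.filter fun i => A i = a) = {⟨0, h0n⟩} := by
        ext i
        simp only [Finset.mem_filter, Finset.mem_univ, true_and, Finset.mem_singleton]
        constructor
        · intro he
          by_contra hc
          rcases eq_or_ne i i₀ with rfl | hii
          · omega
          · by_cases hiz : (i : ℕ) = 0
            · exact absurd (Fin.ext hiz) hc
            · have := hAle i hii hiz; omega
        · rintro rfl; rw [hA0]
      rw [this, Finset.card_singleton]
    have hBrest : ∀ j : Fin n, 3 ≤ (j : ℕ) → (j : ℕ) ≠ a → B j = 0 := by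
      intro j hj hja
      rw [hBj j]
      apply card_filter_none
      intro i
      by_cases hi : i = ⟨0, h0n⟩
      · rw [hi, hA0]; omega
      · rcases eq_or_ne i i₀ with rfl | hii
        · omega
        · by_cases hiz : (i : ℕ) = 0
          · exact absurd (Fin.ext hiz) hi
          · have := hAle i hii hiz; omega
    have hj₀1 : (j₀ : ℕ) = 1 := by
      by_contra hc
      by_cases hc2 : (j₀ : ℕ) = 2
      · rw [show j₀ = ⟨2, h2n⟩ from Fin.ext hc2, hB2] at hBj₀; omega
      · by_cases hca : (j₀ : ℕ) = a
        · rw [show j₀ = ⟨a, han⟩ from Fin.ext hca, hBa] at hBj₀; omega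
        · rw [hBrest j₀ (by omega) hca] at hBj₀; omega
    have hB1 : B ⟨1, h1n⟩ = 2 := by
      rw [← show j₀ = ⟨1, h1n⟩ from Fin.ext hj₀1]; exact hBj₀
    -- weighted sum
    have hwsum : ∑ j : Fin n, (j : ℕ) * B j = n := by
      rw [Finset.sum_congr rfl fun j _ => by rw [hBj j]]
      rw [sum_mul_cnt A hA, sumA]
    have hw3 : ∑ j : Fin n, (j : ℕ) * B j =
        1 * B ⟨1, h1n⟩ + 2 * B ⟨2, h2n⟩ + a * B ⟨a, han⟩ := by
      exact sum_three (f := fun j : Fin n => (j : ℕ) * B j)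
        (p := ⟨1, h1n⟩) (q := ⟨2, h2n⟩) (r := ⟨a, han⟩)
        (by simp [Fin.ext_iff]) (by simp [Fin.ext_iff]; omega) (by simp [Fin.ext_iff]; omega)
        (fun i hp hq hr => by
          show (i : ℕ) * B i = 0
          by_cases hiz : (i : ℕ) = 0
          · rw [hiz, Nat.zero_mul]
          · have h1 : (i:ℕ) ≠ 1 := fun e => hp (Fin.ext e)
            have hh2 : (i:ℕ) ≠ 2 := fun e => hq (Fin.ext e)
            have ha' : (i:ℕ) ≠ a := fun e => hr (Fin.ext e)
            rw [hBrest i (by omega) ha', Nat.mul_zero])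
    rw [hwsum, hB1, hB2, hBa] at hw3
    have hna : n = a + 4 := by omega
    have h7n : 7 ≤ n := by omega
    have hBform : ∀ j : Fin n, B j = fSD n j := by
      intro j
      unfold fSD
      by_cases c0 : (j:ℕ) = 0
      · rw [if_pos c0, show j = ⟨0, h0n⟩ from Fin.ext c0, hB0]; omega
      · rw [if_neg c0]
        by_cases c1 : (j:ℕ) = 1
        · rw [if_pos c1, show j = ⟨1, h1n⟩ from Fin.ext c1, hB1]
        · rw [if_neg c1]
          by_cases c2 : (j:ℕ) = 2
          · rw [if_pos c2, show j = ⟨2, h2n⟩ from Fin.ext c2, hB2]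
          · rw [if_neg c2]
            by_cases c4 : (j:ℕ) = n - 4
            · rw [if_pos c4, show j = ⟨a, han⟩ from Fin.ext (show (j:ℕ) = a by omega), hBa]
            · rw [if_neg c4]
              exact hBrest j (by omega) (by omega)
    have hBfun : B = fSD n := funext hBform
    apply hne
    rw [← hBA, hBfun, countOp_fSD h7n]

lemma forward (h2 : 2 ≤ n) (A B : Fin n → ℕ) (hA : ∀ i, A i < n) (hB : ∀ i, B i < n)
    (hAB : countOp n A = B) (hBA : countOp n B = A) (hne : A ≠ B) :
    amicableCaseA n A B ∨ amicableCaseA n B A ∨ amicableCaseB n A B ∨ amicableCaseB n B A := by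
  have h0n : 0 < n := by omega
  have hAj := hAj_of A B hBA
  have hBj := hAj_of B A hAB
  have sumA := sumA_of A B hB hBA
  have sumB := sumA_of B A hA hAB
  have ha2 : 2 ≤ cnt B 0 := two_le_cntzero h2 A B hA hB hAB hBA hne
  have hb2 : 2 ≤ cnt A 0 := two_le_cntzero h2 B A hB hA hBA hAB (ne_symm' hne)
  have hA0 : A ⟨0, h0n⟩ = cnt B 0 := hAj ⟨0, h0n⟩
  have hB0 : B ⟨0, h0n⟩ = cnt A 0 := hBj ⟨0, h0n⟩
  have hSAeq : A ⟨0, h0n⟩ - 1 + ∑ i ∈ Finset.univ.erase (⟨0, h0n⟩ : Fin n), (A i - 1) =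
      ∑ i, (A i - 1) :=
    Finset.add_sum_erase Finset.univ (fun i => A i - 1) (Finset.mem_univ _)
  have hSBeq : B ⟨0, h0n⟩ - 1 + ∑ i ∈ Finset.univ.erase (⟨0, h0n⟩ : Fin n), (B i - 1) =
      ∑ i, (B i - 1) :=
    Finset.add_sum_erase Finset.univ (fun i => B i - 1) (Finset.mem_univ _)
  rw [excess A sumA, hA0] at hSAeq
  rw [excess B sumB, hB0] at hSBeq
  set SA := ∑ i ∈ Finset.univ.erase (⟨0, h0n⟩ : Fin n), (A i - 1) with hSAdef
  set SB := ∑ i ∈ Finset.univ.erase (⟨0, h0n⟩ : Fin n), (B i - 1) with hSBdef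
  have hcases : (SA = 2 ∧ SB = 0) ∨ (SA = 1 ∧ SB = 1) ∨ (SA = 0 ∧ SB = 2) := by omega
  rcases hcases with ⟨hSA, hSB⟩ | ⟨hSA, hSB⟩ | ⟨hSA, hSB⟩
  · -- SA = 2, SB = 0
    have hSB0 : ∀ i : Fin n, (i : ℕ) ≠ 0 → B i ≤ 1 := by
      intro i hi
      exact sum_le_one (by rw [← hSBdef, hSB]) i
        (Finset.mem_erase.mpr ⟨fun e => hi (by rw [e]), Finset.mem_univ _⟩)
    rcases caseS2 h2 A B hA hB hAB hBA ha2 (by omega) hSB0 with h | h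
    · exact Or.inl h
    · exact Or.inr (Or.inr (Or.inl h))
  · -- SA = 1, SB = 1
    exfalso
    obtain ⟨i₀, hi₀mem, hfi₀, hrestA⟩ := sum_eq_one (f := fun i => A i - 1)
      (by rw [← hSAdef, hSA])
    obtain ⟨j₀, hj₀mem, hfj₀, hrestB⟩ := sum_eq_one (f := fun i => B i - 1)
      (by rw [← hSBdef, hSB])
    have hi₀0 : (i₀ : ℕ) ≠ 0 := fun e => (Finset.mem_erase.mp hi₀mem).1 (Fin.ext e)
    have hj₀0 : (j₀ : ℕ) ≠ 0 := fun e => (Finset.mem_erase.mp hj₀mem).1 (Fin.ext e)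
    have hAi₀2 : A i₀ = 2 := by
      have hle := hA i₀
      have h1 := hfi₀
      try simp only at h1
      omega
    have hBj₀2 : B j₀ = 2 := by
      have h1 := hfj₀
      try simp only at h1
      omega
    apply case11 h2 A B hA hB hAB hBA hne ha2 (by omega) i₀ hi₀0 hAi₀2 ?_ j₀ hj₀0 hBj₀2 ?_
    · intro i hi hi0
      have := hrestA i (Finset.mem_erase.mpr ⟨fun e => hi0 (by rw [e]), Finset.mem_univ _⟩) hi
      try simp only at this
      omega
    · intro i hi hi0
      have := hrestB i (Finset.mem_erase.mpr ⟨fun e => hi0 (by rw [e]), Finset.mem_univ _⟩) hi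
      try simp only at this
      omega
  · -- SA = 0, SB = 2 : symmetric
    have hSA0 : ∀ i : Fin n, (i : ℕ) ≠ 0 → A i ≤ 1 := by
      intro i hi
      exact sum_le_one (by rw [← hSAdef, hSA]) i
        (Finset.mem_erase.mpr ⟨fun e => hi (by rw [e]), Finset.mem_univ _⟩)
    rcases caseS2 h2 B A hB hA hBA hAB hb2 (by omega) hSA0 with h | h
    · exact Or.inr (Or.inl h)
    · exact Or.inr (Or.inr (Or.inr h))

end AmicAux

theorem amicable_chains_classification (n : ℕ) (hn : 1 ≤ n) (x x' : Fin n → ℕ)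
    (hx : ∀ i, x i < n) (hx' : ∀ i, x' i < n) (hne : x ≠ x') :
    (countOp n x = x' ∧ countOp n x' = x) ↔
      (amicableCaseA n x x' ∨ amicableCaseA n x' x ∨
       amicableCaseB n x x' ∨ amicableCaseB n x' x) := by
  constructor
  · rintro ⟨hAB, hBA⟩
    rcases Nat.lt_or_ge n 2 with h1 | h2
    · exfalso
      apply hne
      funext i
      have := hx i
      have := hx' i
      omega
    · exact AmicAux.forward h2 x x' hx hx' hAB hBA hne
  · rintro (⟨h6, hx1, hx2⟩ | ⟨h6, hx1, hx2⟩ | ⟨h8, hx1, hx2⟩ | ⟨h8, hx1, hx2⟩)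
    · subst h6
      rw [funext hx1, funext hx2]
      exact ⟨by decide, by decide⟩
    · subst h6
      rw [funext hx1, funext hx2]
      exact ⟨by decide, by decide⟩
    · have e1 : x = AmicAux.fB1 n := funext hx1
      have e2 : x' = AmicAux.fB2 n := funext hx2
      rw [e1, e2]
      exact ⟨AmicAux.countOp_fB1 h8, AmicAux.countOp_fB2 h8⟩
    · have e1 : x' = AmicAux.fB1 n := funext hx1
      have e2 : x = AmicAux.fB2 n := funext hx2
      rw [e1, e2]
      exact ⟨AmicAux.countOp_fB2 h8, AmicAux.countOp_fB1 h8⟩
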